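/- Let b : (0,1)^m → ℝ be a bounded monomial function b(x) = a·x^μ with bounded range and with C¹-norm bounded by B₁ (i.e., |b| and all first-order partials of b are bounded by B₁ on (0,1)^m and |μ_i| bounded). Let r ∈ ℕ and P_r(x) = (x₁^r,…,x_m^r). Then there exist A, B > 0 depending only on μ, a, B₁, m such that b ∘ P_r is (A·r, B, 0)-mild up to order r: for all ν ∈ ℕ^m with |ν| ≤ r and x ∈ (0,1)^m, |(b∘P_r)^{(ν)}(x)| ≤ B·(Ar)^{|ν|}·|ν|!. -/

import Mathlib

/-- Iterated directional (partial) derivative in coordinate `i`. -/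
noncomputable def pd {m : ℕ} (i : Fin m) (f : (Fin m → ℝ) → ℝ) : (Fin m → ℝ) → ℝ :=
  fun x => deriv (fun t => f (Function.update x i t)) (x i)

/-- The partial derivative of multi-order `ν`. -/
noncomputable def mDeriv {m : ℕ} (ν : Fin m → ℕ) (f : (Fin m → ℝ) → ℝ) :
    (Fin m → ℝ) → ℝ :=
  (List.finRange m).foldr (fun i g => (pd i)^[ν i] g) f

/-- `f` is `(A,B,C)`-mild up to order `r` on `U`. -/
def IsMildUpTo {m : ℕ} (U : Set (Fin m → ℝ)) (f : (Fin m → ℝ) → ℝ)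
    (A B C : ℝ) (r : ℕ∞) : Prop :=
  ContDiffOn ℝ r f U ∧ ∀ ν : Fin m → ℕ, ((∑ i, ν i : ℕ) : ℕ∞) ≤ r → ∀ x ∈ U,
    |mDeriv ν f x| ≤ B * A ^ (∑ i, ν i) * ((Nat.factorial (∑ i, ν i) : ℝ)) ^ (1 + C)


open Finset

namespace PSM

variable {m : ℕ}

def UU (m : ℕ) : Set (Fin m → ℝ) := {x | ∀ i, x i ∈ Set.Ioo (0:ℝ) 1}

lemma isOpen_UU : IsOpen (UU m) := by
  have : UU m = Set.pi Set.univ (fun _ => Set.Ioo (0:ℝ) 1) := by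
    ext x; simp [UU, Set.mem_pi]
  rw [this]
  exact isOpen_set_pi Set.finite_univ (fun i _ => isOpen_Ioo)

lemma pd_congr {f g : (Fin m → ℝ) → ℝ} (h : ∀ y ∈ UU m, f y = g y)
    (i : Fin m) {x} (hx : x ∈ UU m) : pd i f x = pd i g x := by
  apply Filter.EventuallyEq.deriv_eq
  have hc : Continuous (fun t : ℝ => Function.update x i t) := by
    apply continuous_pi
    intro j
    by_cases hj : j = i
    · subst hj; simpa [Function.update_apply] using continuous_id'
    · simpa [Function.update_apply, hj] using continuous_const
  have hmem : x i ∈ (fun t : ℝ => Function.update x i t) ⁻¹' UU m := by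
    simp [Set.mem_preimage, Function.update_eq_self, hx]
  filter_upwards [(isOpen_UU.preimage hc).mem_nhds hmem] with t ht
  exact h _ ht

lemma pd_iter_congr {f g : (Fin m → ℝ) → ℝ} (h : ∀ y ∈ UU m, f y = g y)
    (i : Fin m) (k : ℕ) : ∀ y ∈ UU m, (pd i)^[k] f y = (pd i)^[k] g y := by
  induction k with
  | zero => simpa using h
  | succ k ih =>
    intro y hy
    rw [Function.iterate_succ_apply', Function.iterate_succ_apply']
    exact pd_congr ih i hy

lemma foldr_congr (ν : Fin m → ℕ) {f g : (Fin m → ℝ) → ℝ} (h : ∀ y ∈ UU m, f y = g y) :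
    ∀ L : List (Fin m), ∀ y ∈ UU m,
      L.foldr (fun i g => (pd i)^[ν i] g) f y = L.foldr (fun i g => (pd i)^[ν i] g) g y := by
  intro L
  induction L with
  | nil => exact h
  | cons i L ih =>
    simpa using pd_iter_congr ih i (ν i)

lemma mDeriv_congr (ν : Fin m → ℕ) {f g : (Fin m → ℝ) → ℝ} (h : ∀ y ∈ UU m, f y = g y)
    {x} (hx : x ∈ UU m) : mDeriv ν f x = mDeriv ν g x :=
  foldr_congr ν h (List.finRange m) x hx

noncomputable def Mono (c : ℝ) (s : Fin m → ℝ) : (Fin m → ℝ) → ℝ :=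
  fun y => c * ∏ j, y j ^ (s j)

lemma prod_update (x : Fin m → ℝ) (s : Fin m → ℝ) (i : Fin m) (t : ℝ) :
    ∏ j, (Function.update x i t j) ^ s j = t ^ s i * ∏ j ∈ univ.erase i, x j ^ s j := by
  rw [← Finset.mul_prod_erase univ _ (mem_univ i), Function.update_self]
  congr 1
  exact Finset.prod_congr rfl (fun j hj => by
    rw [Function.update_of_ne (Finset.ne_of_mem_erase hj)])

lemma pd_mono (c : ℝ) (s : Fin m → ℝ) (i : Fin m) {x} (hx : x ∈ UU m) :
    pd i (Mono c s) x = Mono (c * s i) (Function.update s i (s i - 1)) x := by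
  have hxi : (0:ℝ) < x i := (hx i).1
  have key : (fun t : ℝ => Mono c s (Function.update x i t)) =
      fun t => (c * ∏ j ∈ univ.erase i, x j ^ s j) * t ^ (s i) := by
    funext t
    unfold Mono
    rw [prod_update]
    ring
  have hd : HasDerivAt (fun t : ℝ => (c * ∏ j ∈ univ.erase i, x j ^ s j) * t ^ (s i))
      ((c * ∏ j ∈ univ.erase i, x j ^ s j) * (s i * x i ^ (s i - 1))) (x i) :=
    (Real.hasDerivAt_rpow_const (Or.inl hxi.ne')).const_mul _
  have : pd i (Mono c s) x =
      (c * ∏ j ∈ univ.erase i, x j ^ s j) * (s i * x i ^ (s i - 1)) := by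
    unfold pd
    rw [key]
    exact hd.deriv
  rw [this]
  unfold Mono
  rw [← Finset.mul_prod_erase univ _ (mem_univ i), Function.update_self]
  have : ∏ j ∈ univ.erase i, x j ^ (Function.update s i (s i - 1) j)
      = ∏ j ∈ univ.erase i, x j ^ s j :=
    Finset.prod_congr rfl (fun j hj => by
      rw [Function.update_of_ne (Finset.ne_of_mem_erase hj)])
  rw [this]
  ring

end PSM

namespace PSM
variable {m : ℕ}

noncomputable def fall (s : ℝ) (k : ℕ) : ℝ := ∏ j ∈ Finset.range k, (s - j)

lemma pd_iter_mono (c : ℝ) (s : Fin m → ℝ) (i : Fin m) (k : ℕ) :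
    ∀ x ∈ UU m, (pd i)^[k] (Mono c s) x =
      Mono (c * fall (s i) k) (Function.update s i (s i - k)) x := by
  induction k with
  | zero =>
    intro x hx
    simp [fall, Function.update_eq_self]
  | succ k ih =>
    intro x hx
    rw [Function.iterate_succ_apply', pd_congr ih i hx, pd_mono _ _ _ hx]
    have h1 : (c * fall (s i) k) * (Function.update s i (s i - k) i) =
        c * fall (s i) (k + 1) := by
      rw [Function.update_self]
      unfold fall
      rw [Finset.prod_range_succ]
      ring
    have h2 : Function.update (Function.update s i (s i - (k:ℝ))) i
        ((Function.update s i (s i - (k:ℝ))) i - 1) =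
        Function.update s i (s i - ((k:ℕ)+1 : ℕ)) := by
      rw [Function.update_self, Function.update_idem]
      congr 1
      push_cast
      ring
    rw [h1, h2]

lemma foldr_mono (ν : Fin m → ℕ) (c : ℝ) (s : Fin m → ℝ) :
    ∀ L : List (Fin m), L.Nodup → ∀ x ∈ UU m,
      L.foldr (fun i g => (pd i)^[ν i] g) (Mono c s) x =
      Mono (c * (L.map (fun i => fall (s i) (ν i))).prod)
        (fun j => if j ∈ L then s j - ν j else s j) x := by
  intro L
  induction L with
  | nil => intro _ x hx; simp
  | cons i L ih =>
    intro hnd x hx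
    have hiL : i ∉ L := (List.nodup_cons.mp hnd).1
    have hndL : L.Nodup := (List.nodup_cons.mp hnd).2
    rw [List.foldr_cons, pd_iter_congr (ih hndL) i (ν i) x hx,
      pd_iter_mono _ _ _ _ x hx]
    have hs'i : (fun j => if j ∈ L then s j - (ν j : ℝ) else s j) i = s i := by
      simp [hiL]
    have h2 : Function.update (fun j => if j ∈ L then s j - (ν j : ℝ) else s j) i
        ((fun j => if j ∈ L then s j - (ν j : ℝ) else s j) i - (ν i : ℝ)) =
        fun j => if j ∈ i :: L then s j - (ν j : ℝ) else s j := by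
      funext j
      by_cases hj : j = i
      · subst hj
        rw [Function.update_self, hs'i]
        simp
      · rw [Function.update_of_ne hj]
        simp [List.mem_cons, hj]
    have h1 : c * (L.map (fun i => fall (s i) (ν i))).prod *
        fall ((fun j => if j ∈ L then s j - (ν j : ℝ) else s j) i) (ν i) =
        c * ((i :: L).map (fun i => fall (s i) (ν i))).prod := by
      rw [hs'i, List.map_cons, List.prod_cons]
      ring
    rw [h2, h1]

lemma mDeriv_mono (ν : Fin m → ℕ) (c : ℝ) (s : Fin m → ℝ) {x} (hx : x ∈ UU m) :
    mDeriv ν (Mono c s) x = (c * ∏ i, fall (s i) (ν i)) * ∏ i, x i ^ (s i - ν i) := by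
  have h := foldr_mono ν c s (List.finRange m) (List.nodup_finRange m) x hx
  show (List.finRange m).foldr (fun i g => (pd i)^[ν i] g) (Mono c s) x = _
  rw [h]
  unfold Mono
  have e1 : ((List.finRange m).map (fun i => fall (s i) (ν i))).prod
      = ∏ i, fall (s i) (ν i) := (Fin.prod_univ_def _).symm
  have e2 : (∏ j, x j ^ (if j ∈ List.finRange m then s j - (ν j : ℝ) else s j))
      = ∏ i, x i ^ (s i - (ν i : ℝ)) :=
    Finset.prod_congr rfl (fun j _ => by rw [if_pos (List.mem_finRange j)])
  rw [e1, e2]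

lemma mDeriv_of_zero (ν : Fin m → ℕ) (h : ∀ i, ν i = 0) (f : (Fin m → ℝ) → ℝ) :
    mDeriv ν f = f := by
  show (List.finRange m).foldr (fun i g => (pd i)^[ν i] g) f = f
  induction (List.finRange m) with
  | nil => rfl
  | cons i L ih => simp [h i, ih]

lemma mDeriv_single (i : Fin m) (f : (Fin m → ℝ) → ℝ) :
    mDeriv (fun j => if j = i then 1 else 0) f = pd i f := by
  show (List.finRange m).foldr
    (fun j g => (pd j)^[if j = i then 1 else 0] g) f = pd i f
  have key : ∀ L : List (Fin m), L.Nodup →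
      L.foldr (fun j g => (pd j)^[if j = i then 1 else 0] g) f
        = if i ∈ L then pd i f else f := by
    intro L
    induction L with
    | nil => simp
    | cons j L ih =>
      intro hnd
      have hndL : L.Nodup := (List.nodup_cons.mp hnd).2
      rw [List.foldr_cons, ih hndL]
      by_cases hji : j = i
      · subst hji
        have hjL : j ∉ L := (List.nodup_cons.mp hnd).1
        simp [hjL]
      · have : i ≠ j := Ne.symm hji
        simp [hji, List.mem_cons, this]
  rw [key _ (List.nodup_finRange m), if_pos (List.mem_finRange i)]

lemma blowup {c p D : ℝ} (hc : 0 < c) (hp : p < 0)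
    (h : ∀ t ∈ Set.Ioo (0:ℝ) 1, c * t ^ p ≤ D) : False := by
  have hmax : (0:ℝ) ≤ max (D / c) 0 := le_max_right _ _
  have hE1 : (1:ℝ) < max (D / c) 0 + 2 := by linarith
  have hE0 : (0:ℝ) < max (D / c) 0 + 2 := by linarith
  have ht0 : 0 < (max (D / c) 0 + 2) ^ (1 / p) := Real.rpow_pos_of_pos hE0 _
  have ht1 : (max (D / c) 0 + 2) ^ (1 / p) < 1 :=
    Real.rpow_lt_one_of_one_lt_of_neg hE1 (div_neg_of_pos_of_neg one_pos hp)
  have htp : ((max (D / c) 0 + 2) ^ (1 / p)) ^ p = max (D / c) 0 + 2 := by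
    rw [← Real.rpow_mul hE0.le, one_div_mul_cancel hp.ne, Real.rpow_one]
  have hcE : c * (max (D / c) 0 + 2) ≤ D := by
    have := h _ ⟨ht0, ht1⟩
    rwa [htp] at this
  have h1 : D / c ≤ max (D / c) 0 := le_max_left _ _
  rw [div_le_iff₀ hc] at h1
  nlinarith

end PSM

namespace PSM
variable {m : ℕ}

lemma half_mem (i : Fin m) {t : ℝ} (ht : t ∈ Set.Ioo (0:ℝ) 1) :
    Function.update (fun _ => (1/2:ℝ)) i t ∈ UU m := by
  intro j
  by_cases hj : j = i
  · subst hj; simpa using ht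
  · rw [Function.update_of_ne hj]; norm_num

end PSM

open Finset in
theorem power_substitution_mild' {m : ℕ} (a : ℝ) (μ : Fin m → ℝ) (B₁ : ℝ) (hB₁ : 0 < B₁)
    (b : (Fin m → ℝ) → ℝ)
    (hb : ∀ x, (∀ i, x i ∈ Set.Ioo (0 : ℝ) 1) → b x = a * ∏ i, x i ^ (μ i))
    (hbdd : ∀ x, (∀ i, x i ∈ Set.Ioo (0 : ℝ) 1) → |b x| ≤ B₁)
    (hC1 : ∀ x, (∀ i, x i ∈ Set.Ioo (0 : ℝ) 1) → ∀ i : Fin m,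
      |mDeriv (fun j => if j = i then 1 else 0) b x| ≤ B₁) :
    ∃ A B : ℝ, 0 < A ∧ 0 < B ∧ ∀ r : ℕ, ∀ ν : Fin m → ℕ, (∑ i, ν i) ≤ r →
      ∀ x, (∀ i, x i ∈ Set.Ioo (0 : ℝ) 1) →
        |mDeriv ν (fun y => b (fun i => y i ^ r)) x| ≤
          B * (A * r) ^ (∑ i, ν i) * (Nat.factorial (∑ i, ν i) : ℝ) := by
  classical
  have hbU : ∀ y ∈ PSM.UU m, b y = PSM.Mono a μ y := fun y hy => hb y hy
  -- exponent condition
  have hcond : a = 0 ∨ ∀ i, μ i = 0 ∨ 1 ≤ μ i := by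
    by_cases ha : a = 0
    · exact Or.inl ha
    right
    intro i
    have haa : 0 < |a| := abs_pos.mpr ha
    set K := ∏ j ∈ Finset.univ.erase i, ((fun _ => (1/2:ℝ)) j) ^ μ j with hKdef
    have hK : 0 < K :=
      Finset.prod_pos (fun j _ => Real.rpow_pos_of_pos (by norm_num) _)
    have h0 : 0 ≤ μ i := by
      by_contra hneg
      push_neg at hneg
      refine PSM.blowup (c := |a| * K) (D := B₁) (by positivity) hneg ?_
      intro t ht
      have hx := PSM.half_mem i ht
      have hval : b (Function.update (fun _ => (1/2:ℝ)) i t) = (a * K) * t ^ μ i := by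
        rw [hb _ hx, PSM.prod_update]
        ring
      have hB := hbdd _ hx
      rw [hval, abs_mul, abs_mul, abs_of_pos hK,
        abs_of_pos (Real.rpow_pos_of_pos ht.1 _)] at hB
      linarith [hB]
    by_cases h1 : 1 ≤ μ i
    · exact Or.inr h1
    left
    by_contra hne
    have hpos : 0 < μ i := lt_of_le_of_ne h0 (Ne.symm hne)
    push_neg at h1
    refine PSM.blowup (c := |a| * μ i * K) (p := μ i - 1) (D := B₁) (by positivity) (by linarith) ?_
    intro t ht
    have hx := PSM.half_mem i ht
    have hpd : pd i b (Function.update (fun _ => (1/2:ℝ)) i t) =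
        (a * μ i * K) * t ^ (μ i - 1) := by
      rw [PSM.pd_congr hbU i hx, PSM.pd_mono a μ i hx]
      unfold PSM.Mono
      rw [PSM.prod_update, Function.update_self]
      have hKe : ∏ j ∈ Finset.univ.erase i,
          ((fun _ => (1/2:ℝ)) j) ^ (Function.update μ i (μ i - 1) j) = K :=
        Finset.prod_congr rfl (fun j hj => by
          rw [Function.update_of_ne (Finset.ne_of_mem_erase hj)])
      rw [hKe]
      ring
    have hB := hC1 _ hx i
    rw [PSM.mDeriv_single, hpd, abs_mul, abs_mul, abs_mul, abs_of_pos hK,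
      abs_of_pos hpos, abs_of_pos (Real.rpow_pos_of_pos ht.1 _)] at hB
    linarith [hB]
  -- choose constants
  set S : ℝ := ∑ i, |μ i| with hSdef
  have hS0 : 0 ≤ S := Finset.sum_nonneg (fun _ _ => abs_nonneg _)
  refine ⟨S + 1, |a| + |b (fun _ => (1:ℝ))| + 1, by linarith, by positivity, ?_⟩
  intro r ν hν x hx
  have hxU : x ∈ PSM.UU m := hx
  by_cases hr : r = 0
  · subst hr
    have hsum0 : (∑ i, ν i) = 0 := Nat.le_zero.mp hν
    have hν0 : ∀ i, ν i = 0 := fun i =>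
      (Finset.sum_eq_zero_iff.mp hsum0) i (mem_univ i)
    rw [PSM.mDeriv_of_zero ν hν0, hsum0]
    have : (fun i => x i ^ (0:ℕ)) = (fun _ => (1:ℝ)) := by
      funext i; simp
    rw [this]
    norm_num
    linarith [abs_nonneg a, abs_nonneg (b (fun _ => (1:ℝ)))]
  · have hr1 : 1 ≤ r := Nat.one_le_iff_ne_zero.mpr hr
    have hrR : (1:ℝ) ≤ (r:ℝ) := by exact_mod_cast hr1
    set s : Fin m → ℝ := fun i => (r:ℝ) * μ i with hsdef
    have hfU : ∀ y ∈ PSM.UU m, (fun y => b (fun i => y i ^ r)) y = PSM.Mono a s y := by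
      intro y hy
      have hyr : (fun i => y i ^ r) ∈ PSM.UU m := fun i =>
        ⟨pow_pos (hy i).1 r, pow_lt_one₀ (hy i).1.le (hy i).2 hr⟩
      show b (fun i => y i ^ r) = _
      rw [hb _ hyr]
      unfold PSM.Mono
      congr 1
      refine Finset.prod_congr rfl (fun j _ => ?_)
      rw [← Real.rpow_natCast (y j) r, ← Real.rpow_mul (hy j).1.le]
    rw [PSM.mDeriv_congr ν hfU hxU, PSM.mDeriv_mono ν a s hxU]
    set n := ∑ i, ν i with hndef
    have hQ0 : (0:ℝ) ≤ (S + 1) * r := by positivity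
    rcases hcond with ha | hcond
    · rw [ha]
      simp only [zero_mul, abs_zero]
      positivity
    · -- per-coordinate bound
      have key : ∀ i, |PSM.fall (s i) (ν i)| * x i ^ (s i - ν i) ≤ ((S + 1) * r) ^ (ν i) := by
        intro i
        have hνi : ν i ≤ r :=
          le_trans (Finset.single_le_sum (f := ν) (fun _ _ => Nat.zero_le _) (mem_univ i)) hν
        have hμS : μ i ≤ S := le_trans (le_abs_self _)
          (Finset.single_le_sum (f := fun j => |μ j|) (fun _ _ => abs_nonneg _) (mem_univ i))
        have hμ0 : 0 ≤ μ i := by rcases hcond i with h | h <;> linarith [h]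
        by_cases hν0 : ν i = 0
        · have hfall1 : PSM.fall (s i) 0 = 1 := by simp [PSM.fall]
          rw [hν0, hfall1]
          simp only [Nat.cast_zero, sub_zero, pow_zero, abs_one, one_mul]
          refine Real.rpow_le_one (hx i).1.le (hx i).2.le ?_
          rw [hsdef]
          positivity
        · rcases hcond i with hμz | hμ1
          · have hzero : PSM.fall (s i) (ν i) = 0 := by
              refine Finset.prod_eq_zero (Finset.mem_range.mpr (Nat.pos_of_ne_zero hν0)) ?_
              simp [hsdef, hμz]
            rw [hzero]
            simp only [abs_zero, zero_mul]
            positivity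
          · have hνiR : (ν i : ℝ) ≤ (r:ℝ) := by exact_mod_cast hνi
            have hsi : (r:ℝ) ≤ s i := by
              show (r:ℝ) ≤ (r:ℝ) * μ i
              nlinarith [mul_le_mul_of_nonneg_left hμ1 (by linarith : (0:ℝ) ≤ (r:ℝ))]
            have hexp : 0 ≤ s i - ν i := by linarith
            have hx1 : x i ^ (s i - ν i) ≤ 1 :=
              Real.rpow_le_one (hx i).1.le (hx i).2.le hexp
            have hfall : |PSM.fall (s i) (ν i)| ≤ ((S + 1) * r) ^ (ν i) := by
              unfold PSM.fall
              rw [Finset.abs_prod]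
              calc ∏ j ∈ Finset.range (ν i), |s i - (j:ℕ)|
                  ≤ ∏ _j ∈ Finset.range (ν i), ((S + 1) * r) := by
                    refine Finset.prod_le_prod (fun _ _ => abs_nonneg _) (fun j hj => ?_)
                    have hjν : (j:ℝ) < (ν i : ℝ) := by
                      exact_mod_cast Finset.mem_range.mp hj
                    have hj0 : (0:ℝ) ≤ (j:ℝ) := Nat.cast_nonneg _
                    have hnn : 0 ≤ s i - (j:ℝ) := by linarith
                    rw [abs_of_nonneg hnn]
                    have : s i ≤ (S + 1) * r := by
                      show (r:ℝ) * μ i ≤ (S + 1) * (r:ℝ)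
                      nlinarith [mul_le_mul_of_nonneg_left hμS (by linarith : (0:ℝ) ≤ (r:ℝ))]
                    linarith
                _ = ((S + 1) * r) ^ (ν i) := by
                    rw [Finset.prod_const, Finset.card_range]
            calc |PSM.fall (s i) (ν i)| * x i ^ (s i - ν i)
                ≤ |PSM.fall (s i) (ν i)| * 1 :=
                  mul_le_mul_of_nonneg_left hx1 (abs_nonneg _)
              _ = |PSM.fall (s i) (ν i)| := mul_one _
              _ ≤ ((S + 1) * r) ^ (ν i) := hfall
      have hxpos : ∀ i, (0:ℝ) < x i ^ (s i - ν i) :=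
        fun i => Real.rpow_pos_of_pos (hx i).1 _
      have habs : |(a * ∏ i, PSM.fall (s i) (ν i)) * ∏ i, x i ^ (s i - ν i)|
          = |a| * ∏ i, (|PSM.fall (s i) (ν i)| * x i ^ (s i - ν i)) := by
        rw [abs_mul, abs_mul, Finset.abs_prod,
          abs_of_pos (Finset.prod_pos (fun i _ => hxpos i)),
          mul_assoc, ← Finset.prod_mul_distrib]
      rw [habs]
      have hprod : ∏ i, (|PSM.fall (s i) (ν i)| * x i ^ (s i - ν i))
          ≤ ((S + 1) * r) ^ n := by
        calc ∏ i, (|PSM.fall (s i) (ν i)| * x i ^ (s i - ν i))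
            ≤ ∏ i, ((S + 1) * r) ^ (ν i) :=
              Finset.prod_le_prod (fun i _ => mul_nonneg (abs_nonneg _) (hxpos i).le)
                (fun i _ => key i)
          _ = ((S + 1) * r) ^ n := by
              rw [Finset.prod_pow_eq_pow_sum]
      have hfact : (1:ℝ) ≤ (Nat.factorial n : ℝ) := by
        exact_mod_cast Nat.one_le_iff_ne_zero.mpr (Nat.factorial_ne_zero n)
      have hQn : (0:ℝ) ≤ ((S + 1) * r) ^ n := pow_nonneg hQ0 n
      calc |a| * ∏ i, (|PSM.fall (s i) (ν i)| * x i ^ (s i - ν i))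
          ≤ |a| * ((S + 1) * r) ^ n :=
            mul_le_mul_of_nonneg_left hprod (abs_nonneg _)
        _ ≤ (|a| + |b (fun _ => (1:ℝ))| + 1) * ((S + 1) * r) ^ n := by
            have : |a| ≤ |a| + |b (fun _ => (1:ℝ))| + 1 := by
              linarith [abs_nonneg (b (fun _ => (1:ℝ)))]
            exact mul_le_mul_of_nonneg_right this hQn
        _ ≤ (|a| + |b (fun _ => (1:ℝ))| + 1) * ((S + 1) * r) ^ n * (Nat.factorial n : ℝ) := by
            refine le_mul_of_one_le_right ?_ hfact
            have h0 : (0:ℝ) ≤ |a| + |b (fun _ => (1:ℝ))| + 1 := by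
              linarith [abs_nonneg a, abs_nonneg (b (fun _ => (1:ℝ)))]
            exact mul_nonneg h0 hQn


/-- Power substitution of a bounded monomial map with bounded `C¹`-norm is
`(Ar,B,0)`-mild up to order `r`, with `A, B` independent of `r`. -/
theorem power_substitution_mild {m : ℕ} (a : ℝ) (μ : Fin m → ℝ) (B₁ : ℝ) (hB₁ : 0 < B₁)
    (b : (Fin m → ℝ) → ℝ)
    (hb : ∀ x, (∀ i, x i ∈ Set.Ioo (0 : ℝ) 1) → b x = a * ∏ i, x i ^ (μ i))
    (hbdd : ∀ x, (∀ i, x i ∈ Set.Ioo (0 : ℝ) 1) → |b x| ≤ B₁)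
    (hC1 : ∀ x, (∀ i, x i ∈ Set.Ioo (0 : ℝ) 1) → ∀ i : Fin m,
      |mDeriv (fun j => if j = i then 1 else 0) b x| ≤ B₁) :
    ∃ A B : ℝ, 0 < A ∧ 0 < B ∧ ∀ r : ℕ, ∀ ν : Fin m → ℕ, (∑ i, ν i) ≤ r →
      ∀ x, (∀ i, x i ∈ Set.Ioo (0 : ℝ) 1) →
        |mDeriv ν (fun y => b (fun i => y i ^ r)) x| ≤
          B * (A * r) ^ (∑ i, ν i) * (Nat.factorial (∑ i, ν i) : ℝ) := by
  exact power_substitution_mild' a μ B₁ hB₁ b hb hbdd hC1
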